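/- If f : U → ℝ^n with u an interior point of U ⊆ ℝ^m is strongly differentiable at u, then the derivative map x ↦ f'(x) (defined wherever f is differentiable) is continuous at u; that is, for every ε > 0 there is δ > 0 such that whenever x ∈ B(u,δ) and f is differentiable at x, ‖f'(x) − f'(u)‖ ≤ ε. -/

import Mathlib

open Set Metric

/-- `f` is strongly (strictly) differentiable at `u`, an interior point of `s`,
with derivative `A`. -/
def HasStrongDerivAt {m n : ℕ} (f : (Fin m → ℝ) → (Fin n → ℝ))
    (A : (Fin m → ℝ) →L[ℝ] (Fin n → ℝ)) (s : Set (Fin m → ℝ)) (u : Fin m → ℝ) : Prop :=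
  ∀ ε > (0 : ℝ), ∃ δ > (0 : ℝ), ball u δ ⊆ s ∧
    ∀ x ∈ ball u δ, ∀ y ∈ ball u δ, ‖f x - f y - A (x - y)‖ ≤ ε * ‖x - y‖

/-- If `f` is strongly differentiable at `u`, then the derivative map `x ↦ f'(x)`,
defined wherever `f` is differentiable, is continuous at `u`. -/
theorem deriv_continuous_at_strongDeriv_point {m n : ℕ} (U : Set (Fin m → ℝ))
    (u : Fin m → ℝ) (hu : u ∈ interior U) (f : (Fin m → ℝ) → (Fin n → ℝ))
    (A : (Fin m → ℝ) →L[ℝ] (Fin n → ℝ)) (hf : HasStrongDerivAt f A U u) :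
    ∀ ε > (0 : ℝ), ∃ δ > (0 : ℝ), ∀ x ∈ ball u δ,
      ∀ B : (Fin m → ℝ) →L[ℝ] (Fin n → ℝ), HasFDerivAt f B x → ‖B - A‖ ≤ ε := by
  intro ε hε
  obtain ⟨δ, hδ, _, hlip⟩ := hf (ε / 2) (by linarith)
  refine ⟨δ / 2, by linarith, ?_⟩
  intro x hx B hB
  refine ContinuousLinearMap.opNorm_le_bound _ hε.le ?_
  intro v
  rcases eq_or_ne v 0 with rfl | hv
  · simp
  have hv' : 0 < ‖v‖ := norm_pos_iff.mpr hv
  refine le_of_forall_pos_le_add ?_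
  intro c hc
  have hε'0 : 0 < c / ‖v‖ := div_pos hc hv'
  obtain ⟨r, hr, hball⟩ := Metric.eventually_nhds_iff.mp ((hB.isLittleO.def hε'0))
  set t : ℝ := min (r / (2 * ‖v‖)) (δ / (4 * ‖v‖)) with ht
  have ht0 : 0 < t := lt_min (div_pos hr (by positivity)) (div_pos hδ (by positivity))
  set y : Fin m → ℝ := x + t • v with hy
  have hyx : y - x = t • v := by simp [hy]
  have hnyx : ‖y - x‖ = t * ‖v‖ := by rw [hyx, norm_smul, Real.norm_eq_abs, abs_of_pos ht0]
  have htv1 : t * ‖v‖ ≤ r / 2 := by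
    have := min_le_left (r / (2 * ‖v‖)) (δ / (4 * ‖v‖))
    calc t * ‖v‖ ≤ r / (2 * ‖v‖) * ‖v‖ := mul_le_mul_of_nonneg_right this hv'.le
      _ = r / 2 := by field_simp
  have htv2 : t * ‖v‖ ≤ δ / 4 := by
    have := min_le_right (r / (2 * ‖v‖)) (δ / (4 * ‖v‖))
    calc t * ‖v‖ ≤ δ / (4 * ‖v‖) * ‖v‖ := mul_le_mul_of_nonneg_right this hv'.le
      _ = δ / 4 := by field_simp
  have hdyx : dist y x < r := by
    rw [dist_eq_norm, hnyx]; linarith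
  have hx' : x ∈ ball u δ := by
    rw [mem_ball] at hx ⊢; linarith
  have hy' : y ∈ ball u δ := by
    rw [mem_ball] at hx ⊢
    calc dist y u ≤ dist y x + dist x u := dist_triangle _ _ _
      _ < δ := by rw [dist_eq_norm, hnyx]; linarith
  have h1 : ‖f y - f x - B (y - x)‖ ≤ c / ‖v‖ * ‖y - x‖ := hball hdyx
  have h2 : ‖f y - f x - A (y - x)‖ ≤ ε / 2 * ‖y - x‖ := hlip y hy' x hx'
  have key : ‖(B - A) (y - x)‖ ≤ (ε / 2 + c / ‖v‖) * ‖y - x‖ := by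
    have : (B - A) (y - x) = (f y - f x - A (y - x)) - (f y - f x - B (y - x)) := by
      simp [ContinuousLinearMap.sub_apply]
    rw [this]
    calc ‖_ - _‖ ≤ ‖f y - f x - A (y - x)‖ + ‖f y - f x - B (y - x)‖ := norm_sub_le _ _
      _ ≤ ε / 2 * ‖y - x‖ + c / ‖v‖ * ‖y - x‖ := add_le_add h2 h1
      _ = (ε / 2 + c / ‖v‖) * ‖y - x‖ := by ring
  have hkey2 : t * ‖(B - A) v‖ ≤ t * ((ε / 2 + c / ‖v‖) * ‖v‖) := by
    calc t * ‖(B - A) v‖ = ‖(B - A) (y - x)‖ := by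
          rw [hyx, map_smul, norm_smul, Real.norm_eq_abs, abs_of_pos ht0]
      _ ≤ (ε / 2 + c / ‖v‖) * ‖y - x‖ := key
      _ = t * ((ε / 2 + c / ‖v‖) * ‖v‖) := by rw [hnyx]; ring
  have hfin : ‖(B - A) v‖ ≤ (ε / 2 + c / ‖v‖) * ‖v‖ :=
    le_of_mul_le_mul_left hkey2 ht0
  calc ‖(B - A) v‖ ≤ (ε / 2 + c / ‖v‖) * ‖v‖ := hfin
    _ = ε / 2 * ‖v‖ + c := by field_simp
    _ ≤ ε * ‖v‖ + c := by nlinarith
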